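/- arXiv:1707.02493 — 3 statements merged into one kernel-verified Lean document; each statement's English description precedes it below -/
import Mathlib

section
/- Let n ≥ 1 and s ≥ 1 be integers, and let a = (a_1,…,a_s) and b = (b_1,…,b_s) be vectors in ℤ^s such that for every vector A = (A_1,…,A_s) ∈ ℤ^s, the dot product a·A is divisible by n if and only if b·A is divisible by n. Then there exists an integer u coprime to n such that u·a_i ≡ b_i (mod n) for every i = 1,…,s. -/
theorem stmt_0 (n s : ℕ) (hn : 1 ≤ n) (hs : 1 ≤ s) (a b : Fin s → ℤ)
    (h : ∀ A : Fin s → ℤ, (n : ℤ) ∣ ∑ i, a i * A i ↔ (n : ℤ) ∣ ∑ i, b i * A i) :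
    ∃ u : ℤ, IsCoprime u (n : ℤ) ∧ ∀ i, u * a i ≡ b i [ZMOD (n : ℕ)] := by
  have hn0 : (0:ℤ) < n := by exact_mod_cast hn
  -- the subgroup of values
  set G : AddSubgroup ℤ :=
    { carrier := {x | ∃ A : Fin s → ℤ, ∃ k : ℤ, x = ∑ i, a i * A i + n * k}
      zero_mem' := ⟨0, 0, by simp⟩
      add_mem' := by
        rintro x y ⟨A, k, rfl⟩ ⟨B, l, rfl⟩
        refine ⟨A + B, k + l, ?_⟩
        simp only [Pi.add_apply, mul_add, Finset.sum_add_distrib]; ring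
      neg_mem' := by
        rintro x ⟨A, k, rfl⟩
        refine ⟨-A, -k, ?_⟩
        simp only [Pi.neg_apply, mul_neg, Finset.sum_neg_distrib]; ring } with hGdef
  obtain ⟨d, hd⟩ := Int.subgroup_cyclic G
  have memG : ∀ x : ℤ, x ∈ G ↔ d ∣ x := by
    intro x
    rw [hd, AddSubgroup.mem_closure_singleton]
    constructor
    · rintro ⟨k, rfl⟩; exact ⟨k, by rw [zsmul_eq_mul, Int.cast_id, mul_comm]⟩
    · rintro ⟨k, rfl⟩; exact ⟨k, by rw [zsmul_eq_mul, Int.cast_id, mul_comm]⟩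
  have hdn : d ∣ (n:ℤ) := (memG _).1 ⟨0, 1, by simp⟩
  have hda : ∀ i, d ∣ a i := by
    intro i
    refine (memG _).1 ⟨fun j => if j = i then 1 else 0, 0, ?_⟩
    simp [mul_ite, Finset.sum_ite_eq']
  set D : ℤ := |d| with hD
  have hDdvd : ∀ x : ℤ, D ∣ x ↔ d ∣ x := fun x => abs_dvd d x
  have hD0 : 0 < D := by
    rcases eq_or_ne d 0 with h0 | h0
    · exfalso; rw [h0] at hdn; simp at hdn; omega
    · exact abs_pos.2 h0
  have hDn : D ∣ (n:ℤ) := (hDdvd _).2 hdn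
  have hDa : ∀ i, D ∣ a i := fun i => (hDdvd _).2 (hda i)
  obtain ⟨A₀, k₀, hA₀⟩ : D ∈ G := (memG _).2 ((hDdvd D).1 dvd_rfl)
  obtain ⟨e, he⟩ := hDn
  have he0 : 0 < e := by nlinarith
  -- D divides every ∑ b i * A i
  have hDsa : ∀ A : Fin s → ℤ, D ∣ ∑ i, a i * A i :=
    fun A => Finset.dvd_sum fun i _ => (hDa i).mul_right _
  have hDb : ∀ A : Fin s → ℤ, D ∣ ∑ i, b i * A i := by
    intro A
    obtain ⟨t, ht⟩ := hDsa A
    have h1 : (n:ℤ) ∣ ∑ i, a i * (e * A i) := by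
      have : ∑ i, a i * (e * A i) = e * ∑ i, a i * A i := by
        rw [Finset.mul_sum]; exact Finset.sum_congr rfl fun i _ => by ring
      rw [this, ht, he]; exact ⟨t, by ring⟩
    have h2 := (h _).1 h1
    have h3 : ∑ i, b i * (e * A i) = e * ∑ i, b i * A i := by
      rw [Finset.mul_sum]; exact Finset.sum_congr rfl fun i _ => by ring
    rw [h3, he] at h2
    rw [mul_comm] at h2
    exact (mul_dvd_mul_iff_left he0.ne').1 h2
  obtain ⟨m, hm⟩ := hDb A₀
  -- m is coprime to e
  have hcop : IsCoprime m e := by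
    rw [Int.isCoprime_iff_gcd_eq_one]
    by_contra hg
    set g : ℕ := Int.gcd m e with hgdef
    have hg0 : g ≠ 0 := by
      intro h0
      have := Int.gcd_eq_zero_iff.1 h0
      omega
    have hg2 : 2 ≤ (g:ℤ) := by omega
    obtain ⟨f, hf⟩ : (g:ℤ) ∣ e := Int.gcd_dvd_right m e
    obtain ⟨m', hm'⟩ : (g:ℤ) ∣ m := Int.gcd_dvd_left m e
    have hf0 : 0 < f := by nlinarith
    have hb' : (n:ℤ) ∣ ∑ i, b i * (f * A₀ i) := by
      have h3 : ∑ i, b i * (f * A₀ i) = f * ∑ i, b i * A₀ i := by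
        rw [Finset.mul_sum]; exact Finset.sum_congr rfl fun i _ => by ring
      rw [h3, hm, hm']
      exact ⟨m', by rw [he, hf]; ring⟩
    have ha' := (h _).2 hb'
    have h4 : ∑ i, a i * (f * A₀ i) = f * ∑ i, a i * A₀ i := by
      rw [Finset.mul_sum]; exact Finset.sum_congr rfl fun i _ => by ring
    have hsum0 : ∑ i, a i * A₀ i = D - n * k₀ := by linarith [hA₀]
    rw [h4, hsum0] at ha'
    have h5 : (n:ℤ) ∣ f * D := by
      have h7 : f * D = f * (D - n * k₀) + n * (f * k₀) := by ring
      rw [h7]; exact dvd_add ha' ⟨f * k₀, rfl⟩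
    have h6 : (n:ℤ) ≤ f * D := Int.le_of_dvd (by positivity) h5
    nlinarith [he, hf, hD0, hf0, hg2, h6]
  -- congruence b i ≡ m * a i mod n
  have hkey : ∀ i, (n:ℤ) ∣ b i - a i * m := by
    intro i
    obtain ⟨r, hr⟩ := hDa i
    have ha5 : (n:ℤ) ∣ ∑ j, a j * ((if j = i then 1 else 0) - r * A₀ j) := by
      have hexp : ∑ j, a j * ((if j = i then 1 else 0) - r * A₀ j)
          = (∑ j, a j * (if j = i then 1 else 0)) - r * ∑ j, a j * A₀ j := by
        rw [Finset.mul_sum, ← Finset.sum_sub_distrib]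
        exact Finset.sum_congr rfl fun j _ => by ring
      rw [hexp]
      have h1 : ∑ j, a j * (if j = i then 1 else 0) = a i := by
        simp [mul_ite, Finset.sum_ite_eq']
      have h2 : ∑ j, a j * A₀ j = D - n * k₀ := by linarith [hA₀]
      rw [h1, h2, hr]
      exact ⟨r * k₀, by ring⟩
    have hb5 := (h _).1 ha5
    have hexp : ∑ j, b j * ((if j = i then 1 else 0) - r * A₀ j)
        = (∑ j, b j * (if j = i then 1 else 0)) - r * ∑ j, b j * A₀ j := by
      rw [Finset.mul_sum, ← Finset.sum_sub_distrib]
      exact Finset.sum_congr rfl fun j _ => by ring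
    have h1 : ∑ j, b j * (if j = i then 1 else 0) = b i := by
      simp [mul_ite, Finset.sum_ite_eq']
    rw [hexp, h1, hm] at hb5
    have : b i - a i * m = b i - r * (D * m) := by rw [hr]; ring
    rw [this]
    exact hb5
  -- lift m to a unit mod n
  haveI : NeZero n := ⟨by omega⟩
  set E : ℕ := e.toNat with hE
  have hEe : (E:ℤ) = e := Int.toNat_of_nonneg he0.le
  have hE0 : 0 < E := by omega
  haveI : NeZero E := ⟨by omega⟩
  have hEn : E ∣ n := by
    have h1 : (E:ℤ) ∣ (n:ℤ) := by rw [hEe, he]; exact ⟨D, mul_comm D e⟩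
    exact_mod_cast h1
  set x : ℕ := (m % E).toNat with hx
  have hxint : (x:ℤ) = m % (E:ℤ) :=
    Int.toNat_of_nonneg (Int.emod_nonneg m (by exact_mod_cast hE0.ne'))
  have hcopE : IsCoprime m (E:ℤ) := by rw [hEe]; exact hcop
  have hxcopZ : IsCoprime ((x:ℕ):ℤ) ((E:ℕ):ℤ) := by
    have hre : m % (E:ℤ) = m + (-(m / (E:ℤ))) * E := by rw [Int.emod_def]; ring
    rw [hxint, hre]
    exact hcopE.add_mul_right_left _
  have hxcop : Nat.Coprime x E := by
    have := Int.isCoprime_iff_gcd_eq_one.1 hxcopZ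
    simpa [Int.gcd_natCast_natCast] using this
  obtain ⟨U, hU⟩ := ZMod.unitsMap_surjective hEn (ZMod.unitOfCoprime x hxcop)
  refine ⟨((U : ZMod n).val : ℤ), ?_, ?_⟩
  · rw [Int.isCoprime_iff_gcd_eq_one]
    rw [Int.gcd_natCast_natCast]
    exact ZMod.val_coe_unit_coprime U
  · -- the congruence
    have hcast : (((U : ZMod n).val : ℤ) : ZMod E) = ((m : ℤ) : ZMod E) := by
      have h1 : ((((U : ZMod n).val : ℕ)) : ZMod E) = ZMod.cast (U : ZMod n) :=
        ZMod.natCast_val _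
      have h2 : ZMod.cast (U : ZMod n) = ((x : ℕ) : ZMod E) := by
        have := congrArg (fun (w : (ZMod E)ˣ) => (w : ZMod E)) hU
        simpa [ZMod.unitsMap_def, ZMod.coe_unitOfCoprime] using this
      have h3 : (((x:ℕ)) : ZMod E) = ((m : ℤ) : ZMod E) := by
        have : (((x:ℤ)) : ZMod E) = ((m : ℤ) : ZMod E) := by
          rw [hxint]
          simp [ZMod.intCast_cast, Int.emod_emod_of_dvd, ZMod.intCast_eq_intCast_iff]
        simpa using this
      push_cast
      rw [h1, h2, h3]
    have hEdvd : (E:ℤ) ∣ ((U : ZMod n).val : ℤ) - m :=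
      ((ZMod.intCast_eq_intCast_iff _ _ _).1 hcast).symm.dvd
    intro i
    have goal2 : (n:ℤ) ∣ b i - ((U : ZMod n).val : ℤ) * a i := by
      obtain ⟨r, hr⟩ := hDa i
      obtain ⟨t, ht⟩ := hEdvd
      have hsplit : b i - ((U : ZMod n).val : ℤ) * a i
          = (b i - a i * m) - (((U : ZMod n).val : ℤ) - m) * a i := by ring
      rw [hsplit]
      refine dvd_sub (hkey i) ?_
      rw [ht, hr, he]
      exact ⟨t * r, by rw [← hEe]; ring⟩
    exact Int.modEq_iff_dvd.2 goal2
end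

section
/- Let G = (ℤ/nℤ)^s and suppose T_1,…,T_s are cyclic subgroups of G that together generate G. Then each T_i is cyclic of order n and G is the internal direct product T_1 × T_2 × ⋯ × T_s. -/
theorem stmt_3 (n s : ℕ) (hn : 0 < n) (T : Fin s → AddSubgroup (Fin s → ZMod n))
    (hcyc : ∀ i, ∃ g, T i = AddSubgroup.closure {g})
    (hgen : (⨆ i, T i) = ⊤) :
    (∀ i, Nat.card (T i) = n) ∧ iSupIndep T := by
  haveI : NeZero n := ⟨hn.ne'⟩
  -- each T i has card dividing n
  have hdvd : ∀ i, Nat.card (T i) ∣ n := by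
    intro i
    obtain ⟨g, hg⟩ := hcyc i
    have hz : T i = AddSubgroup.zmultiples g := by
      rw [hg, AddSubgroup.zmultiples_eq_closure]
    rw [hz, Nat.card_zmultiples, addOrderOf_dvd_iff_nsmul_eq_zero]
    funext j
    simp [nsmul_eq_mul, ZMod.natCast_self]
  -- the submodule picture
  let e := AddSubgroup.toZModSubmodule (M := Fin s → ZMod n) n
  let P : Fin s → Submodule (ZMod n) (Fin s → ZMod n) := fun i => e (T i)
  have hP : ⨆ i, P i = ⊤ := by
    have := e.map_iSup T
    rw [hgen] at this
    rw [← this]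
    exact e.map_top.symm
  let f := DFinsupp.lsum ℕ (M := fun i => ↥(P i)) fun i => (P i).subtype
  have hsurj : Function.Surjective f := by
    rw [← LinearMap.range_eq_top, ← Submodule.iSup_eq_range_dfinsupp_lsum, hP]
  haveI : Finite (Π₀ i, ↥(P i)) := Finite.of_equiv _ DFinsupp.equivFunOnFintype.symm
  -- cardinalities
  have hcardG : Nat.card (Fin s → ZMod n) = n ^ s := by
    simp [Nat.card_pi, Nat.card_zmod]
  have hcardD : Nat.card (Π₀ i, ↥(P i)) = ∏ i : Fin s, Nat.card (T i) := by
    rw [Nat.card_congr DFinsupp.equivFunOnFintype, Nat.card_pi]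
    exact Finset.prod_congr rfl fun i _ => rfl
  have hle : ∀ i, Nat.card (T i) ≤ n := fun i => Nat.le_of_dvd hn (hdvd i)
  have hprodle : ∏ i : Fin s, Nat.card (T i) ≤ n ^ s := by
    calc ∏ i : Fin s, Nat.card (T i) ≤ ∏ _i : Fin s, n :=
          Finset.prod_le_prod (fun _ _ => Nat.zero_le _) (fun i _ => hle i)
      _ = n ^ s := by simp
  have hge : n ^ s ≤ ∏ i : Fin s, Nat.card (T i) := by
    rw [← hcardG, ← hcardD]
    exact Nat.card_le_card_of_surjective f hsurj
  have hprod : ∏ i : Fin s, Nat.card (T i) = n ^ s := le_antisymm hprodle hge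
  have hcard : ∀ i, Nat.card (T i) = n := by
    intro j
    refine le_antisymm (hle j) ?_
    have h1 : ∏ i ∈ Finset.univ.erase j, Nat.card (T i) ≤ n ^ (s - 1) := by
      calc ∏ i ∈ Finset.univ.erase j, Nat.card (T i)
          ≤ ∏ _i ∈ Finset.univ.erase j, n :=
            Finset.prod_le_prod (fun _ _ => Nat.zero_le _) (fun i _ => hle i)
        _ = n ^ (s - 1) := by
            rw [Finset.prod_const]
            congr 1
            simp [Finset.card_erase_of_mem]
    have h2 : n * n ^ (s - 1) = n ^ s := by
      rw [← pow_succ']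
      congr 1
      have : 1 ≤ s := j.pos
      omega
    have h3 : n * n ^ (s - 1) ≤ Nat.card (T j) * n ^ (s - 1) := by
      rw [h2, ← hprod, ← Finset.mul_prod_erase _ _ (Finset.mem_univ j)]
      exact Nat.mul_le_mul_left _ h1
    have hpos : 0 < n ^ (s - 1) := Nat.pow_pos hn
    exact Nat.le_of_mul_le_mul_right (by simpa [mul_comm] using h3) hpos
  refine ⟨hcard, ?_⟩
  -- independence via injectivity of lsum
  have hcardeq : Nat.card (Π₀ i, ↥(P i)) = Nat.card (Fin s → ZMod n) := by
    rw [hcardD, hcardG]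
    simp [hcard]
  have hinj : Function.Injective f := by
    have := (Nat.bijective_iff_surjective_and_card f).mpr ⟨hsurj, hcardeq⟩
    exact this.injective
  have hindP : iSupIndep P := iSupIndep_of_dfinsupp_lsum_injective P hinj
  exact (iSupIndep_map_orderIso_iff e).mp hindP
end

section
/- Let S = (m_{ij}) be an s×s symmetric sign matrix, i.e., m_{ii} = 0, m_{ij} = m_{ji} = ±1 for i ≠ j. Then there exist distinct odd primes p_1,…,p_s, all congruent to 1 mod 4, such that m_{ij} = (p_i/p_j) (Legendre symbol) for all i ≠ j. -/
open Finset in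
lemma key_lemma (s : ℕ) (p : Fin s → ℕ) (hp : ∀ i, (p i).Prime) (h4 : ∀ i, p i % 4 = 1)
    (hinj : Function.Injective p) (ε : Fin s → ℤ) (hε : ∀ i, ε i = 1 ∨ ε i = -1) :
    ∃ q : ℕ, q.Prime ∧ q % 4 = 1 ∧ (∀ i, p i < q) ∧ ∀ i, jacobiSym q (p i) = ε i := by
  classical
  have hpne2 : ∀ i, p i ≠ 2 := by
    intro i h
    have := h4 i; rw [h] at this; omega
  -- choose residues
  have hc : ∀ i, ∃ c : ZMod (p i), c ≠ 0 ∧ (IsSquare c ↔ ε i = 1) := by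
    intro i
    haveI : Fact (p i).Prime := ⟨hp i⟩
    rcases hε i with h | h
    · exact ⟨1, one_ne_zero, by simp [h]⟩
    · obtain ⟨b, hb⟩ : ∃ b : ZMod (p i), ¬IsSquare b := by
        apply FiniteField.exists_nonsquare
        rw [ZMod.ringChar_zmod_n]
        exact hpne2 i
      refine ⟨b, fun h0 => hb (h0 ▸ ⟨0, (mul_zero 0).symm⟩), ?_⟩
      constructor
      · intro h'; exact absurd h' hb
      · intro h'; rw [h] at h'; omega
  choose c hc0 hcsq using hc
  set n : Fin (s + 1) → ℕ := Fin.cons 4 p with hn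
  have hcop : Pairwise (Function.onFun Nat.Coprime n) := by
    intro i j hij
    have h2cop : ∀ k, Nat.Coprime 4 (p k) := by
      intro k
      have : Nat.Coprime 2 (p k) :=
        (Nat.coprime_primes Nat.prime_two (hp k)).mpr (fun h => hpne2 k h.symm)
      have := Nat.Coprime.pow_left 2 this
      simpa using this
    induction i using Fin.cases with
    | zero =>
      induction j using Fin.cases with
      | zero => exact absurd rfl hij
      | succ j' => simpa [Function.onFun, hn] using h2cop j'
    | succ i' =>
      induction j using Fin.cases with
      | zero => simpa [Function.onFun, hn] using (h2cop i').symm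
      | succ j' =>
        simp only [Function.onFun, hn, Fin.cons_succ]
        exact (Nat.coprime_primes (hp i') (hp j')).mpr
          fun h => hij (congrArg Fin.succ (hinj h))
  haveI : NeZero (∏ j, n j) := ⟨Finset.prod_ne_zero_iff.mpr fun j _ => by
    refine Fin.cases ?_ ?_ j
    · simp [hn]
    · intro i; simpa [hn] using (hp i).pos.ne'⟩
  set e := ZMod.prodEquivPi n hcop with he
  set t : ∀ j, ZMod (n j) := Fin.cons (1 : ZMod 4) c with ht
  have htu : IsUnit t := by
    have hu : ∀ j, IsUnit (t j) := by
      refine Fin.cases ?_ ?_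
      · have h0 : t 0 = (1 : ZMod 4) := by simp [ht]; exact Fin.cons_zero _ _
        rw [h0]; exact isUnit_one
      · intro i
        haveI : Fact (p i).Prime := ⟨hp i⟩
        have h1 : t i.succ = c i := by simp [ht]; exact Fin.cons_succ _ _ _
        rw [h1]
        exact isUnit_iff_ne_zero.mpr (hc0 i)
    choose u hu' using hu
    exact IsUnit.of_mul_eq_one (a := t) (fun j => ↑(u j)⁻¹)
      (funext fun j => by rw [Pi.mul_apply]; rw [← hu' j]; exact Units.mul_inv _)
  have hau : IsUnit (e.symm t) := htu.map e.symm
  obtain ⟨q, hq_gt, hq_prime, hq_mod⟩ :=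
    Nat.forall_exists_prime_gt_and_eq_mod hau (Finset.univ.sup p)
  have hq_comp : ∀ j, (q : ZMod (n j)) = t j := by
    intro j
    have : e ((q : ZMod (∏ j, n j))) = t := by rw [hq_mod, RingEquiv.apply_symm_apply]
    have h2 : e ((q : ZMod (∏ j, n j))) = fun j => (q : ZMod (n j)) := by
      rw [map_natCast]; rfl
    rw [h2] at this
    exact congrFun this j
  have hq4 : q % 4 = 1 := by
    have := hq_comp 0
    have h0 : (q : ZMod 4) = 1 := this.trans (Fin.cons_zero (α := fun j => ZMod (n j)) _ _)
    calc q % 4 = (q : ZMod 4).val := (ZMod.val_natCast 4 q).symm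
    _ = (1 : ZMod 4).val := by rw [h0]
    _ = 1 := by
      haveI : Fact (1 < 4) := ⟨by norm_num⟩
      exact ZMod.val_one 4
  refine ⟨q, hq_prime, hq4, fun i => lt_of_le_of_lt (Finset.le_sup (Finset.mem_univ i)) hq_gt,
    fun i => ?_⟩
  haveI : Fact (p i).Prime := ⟨hp i⟩
  have hqc : ((q : ℤ) : ZMod (p i)) = c i := by
    have := hq_comp i.succ
    push_cast
    exact this.trans (Fin.cons_succ (α := fun j => ZMod (n j)) _ _ _)
  rw [← jacobiSym.legendreSym.to_jacobiSym]
  rcases hε i with h | h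
  · rw [h, legendreSym.eq_one_iff _ (by rw [hqc]; exact hc0 i), hqc, hcsq, h]
  · rw [h, legendreSym.eq_neg_one_iff, hqc]
    intro hsq
    have := (hcsq i).mp hsq
    rw [h] at this; omega

theorem stmt_9 (s : ℕ) (m : Matrix (Fin s) (Fin s) ℤ)
    (hdiag : ∀ i, m i i = 0)
    (hsymm : ∀ i j, m i j = m j i)
    (hoff : ∀ i j, i ≠ j → m i j = 1 ∨ m i j = -1) :
    ∃ p : Fin s → ℕ, Function.Injective p ∧
      (∀ i, (p i).Prime ∧ Odd (p i) ∧ p i % 4 = 1) ∧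
      (∀ i j, i ≠ j → m i j = jacobiSym (p i) (p j)) := by
  induction s with
  | zero => exact ⟨fun i => i.elim0, fun i => i.elim0, fun i => i.elim0, fun i => i.elim0⟩
  | succ s ih =>
    obtain ⟨p, hpinj, hps, hpj⟩ := ih (m.submatrix Fin.castSucc Fin.castSucc)
      (fun i => hdiag _) (fun i j => hsymm _ _)
      (fun i j hij => hoff _ _ (fun h => hij (Fin.castSucc_injective s h)))
    set ε : Fin s → ℤ := fun i => m i.castSucc (Fin.last s) with hε_def
    have hε : ∀ i, ε i = 1 ∨ ε i = -1 :=
      fun i => hoff _ _ (Fin.castSucc_lt_last i).ne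
    obtain ⟨q, hq_prime, hq4, hqgt, hqj⟩ :=
      key_lemma s p (fun i => (hps i).1) (fun i => (hps i).2.2) hpinj ε hε
    have hq_odd : Odd q := Nat.odd_iff.mpr (by omega)
    refine ⟨Fin.snoc p q, ?_, ?_, ?_⟩
    · intro i j h
      induction i using Fin.lastCases with
      | last =>
        induction j using Fin.lastCases with
        | last => rfl
        | cast j' =>
          rw [Fin.snoc_last, Fin.snoc_castSucc] at h
          exact absurd h.symm (hqgt j').ne
      | cast i' =>
        induction j using Fin.lastCases with
        | last =>
          rw [Fin.snoc_last, Fin.snoc_castSucc] at h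
          exact absurd h (hqgt i').ne
        | cast j' =>
          rw [Fin.snoc_castSucc, Fin.snoc_castSucc] at h
          exact congrArg Fin.castSucc (hpinj h)
    · intro i
      induction i using Fin.lastCases with
      | last => rw [Fin.snoc_last]; exact ⟨hq_prime, hq_odd, hq4⟩
      | cast i' => rw [Fin.snoc_castSucc]; exact hps i'
    · intro i j hij
      induction i using Fin.lastCases with
      | last =>
        induction j using Fin.lastCases with
        | last => exact absurd rfl hij
        | cast j' =>
          rw [Fin.snoc_last, Fin.snoc_castSucc, hsymm]
          exact (hqj j').symm
      | cast i' =>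
        induction j using Fin.lastCases with
        | last =>
          rw [Fin.snoc_last, Fin.snoc_castSucc,
            jacobiSym.quadratic_reciprocity_one_mod_four (hps i').2.2 hq_odd]
          exact (hqj i').symm
        | cast j' =>
          rw [Fin.snoc_castSucc, Fin.snoc_castSucc]
          exact hpj i' j' (fun h => hij (congrArg Fin.castSucc h))
end
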